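/- Let X be a random variable with values in [t]^n, and for a subset L ⊆ [n] let X_L denote the projection of X to coordinates in L. For any 1 ≤ l ≤ n, (l/n)·H(X) ≤ E_L[H(X_L)], where the expectation is over a uniformly random l-element subset L of [n] and H is Shannon entropy. -/

import Mathlib

/-- Binary Shannon entropy of a probability mass function on a finite type
(with the convention 0·log 0 = 0). -/
noncomputable def shEnt {α : Type*} [Fintype α] (p : α → ℝ) : ℝ :=
  -∑ x, p x * Real.logb 2 (p x)

/-- The distribution of the projection X_L of X ∼ p to the coordinates in L,
encoded as a distribution on `Fin n → Option (Fin t)` (coordinates outside L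
are mapped to `none`). -/
noncomputable def projDist {n t : ℕ} (p : (Fin n → Fin t) → ℝ) (L : Finset (Fin n)) :
    (Fin n → Option (Fin t)) → ℝ :=
  fun z => ∑ x ∈ Finset.univ.filter
    (fun x : Fin n → Fin t => (fun i => if i ∈ L then some (x i) else none) = z), p x

open Finset

namespace Shearer

variable {n t : ℕ}

def proj (L : Finset (Fin n)) (x : Fin n → Fin t) : Fin n → Option (Fin t) :=
  fun i => if i ∈ L then some (x i) else none

def res (L : Finset (Fin n)) (z : Fin n → Option (Fin t)) : Fin n → Option (Fin t) :=
  fun i => if i ∈ L then z i else none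

lemma projDist_eq (p : (Fin n → Fin t) → ℝ) (L : Finset (Fin n)) (z) :
    projDist p L z = ∑ x ∈ univ.filter (fun x => proj L x = z), p x := rfl

lemma res_proj {A L : Finset (Fin n)} (h : A ⊆ L) (x : Fin n → Fin t) :
    res A (proj L x) = proj A x := by
  funext i
  simp only [res, proj]
  by_cases hi : i ∈ A
  · simp [hi, h hi]
  · simp [hi]

lemma res_res {I A : Finset (Fin n)} (h : I ⊆ A) (z : Fin n → Option (Fin t)) :
    res I (res A z) = res I z := by
  funext i
  simp only [res]
  by_cases hi : i ∈ I
  · simp [hi, h hi]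
  · simp [hi]

variable (p : (Fin n → Fin t) → ℝ)

lemma projDist_nonneg (hp : ∀ x, 0 ≤ p x) (L : Finset (Fin n)) (z) :
    0 ≤ projDist p L z :=
  Finset.sum_nonneg fun x _ => hp x

lemma sum_projDist (L : Finset (Fin n)) : ∑ z, projDist p L z = ∑ x, p x := by
  simpa [projDist_eq] using Finset.sum_fiberwise (univ : Finset (Fin n → Fin t)) (proj L) p

/-- marginal consistency -/
lemma marg {I A : Finset (Fin n)} (h : I ⊆ A) (w : Fin n → Option (Fin t)) :
    ∑ a ∈ univ.filter (fun a => res I a = w), projDist p A a = projDist p I w := by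
  rw [Finset.sum_filter]
  have : ∀ a : Fin n → Option (Fin t),
      (if res I a = w then projDist p A a else 0)
        = ∑ x ∈ univ.filter (fun x => proj A x = a),
            (if res I (proj A x) = w then p x else 0) := by
    intro a
    rw [projDist_eq]
    split_ifs with hw
    · refine Finset.sum_congr rfl fun x hx => ?_
      rw [if_pos (by rw [(Finset.mem_filter.mp hx).2, hw])]
    · symm
      refine Finset.sum_eq_zero fun x hx => ?_
      rw [if_neg (by rw [(Finset.mem_filter.mp hx).2]; exact hw)]
  rw [Finset.sum_congr rfl (fun a _ => this a),
    Finset.sum_fiberwise (univ : Finset (Fin n → Fin t)) (proj A)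
      (fun x => if res I (proj A x) = w then p x else 0)]
  rw [projDist_eq, Finset.sum_filter]
  refine Finset.sum_congr rfl fun x _ => ?_
  rw [res_proj h]

lemma single_le_projDist (hp : ∀ x, 0 ≤ p x) (L : Finset (Fin n)) (x : Fin n → Fin t) :
    p x ≤ projDist p L (proj L x) := by
  rw [projDist_eq]
  exact Finset.single_le_sum (fun y _ => hp y) (by simp)

lemma shEnt_projDist (L : Finset (Fin n)) :
    shEnt (projDist p L) = -∑ x, p x * Real.logb 2 (projDist p L (proj L x)) := by
  unfold shEnt
  congr 1
  rw [← Finset.sum_fiberwise (univ : Finset (Fin n → Fin t)) (proj L)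
    (fun x => p x * Real.logb 2 (projDist p L (proj L x)))]
  refine Finset.sum_congr rfl fun z _ => ?_
  rw [projDist_eq, Finset.sum_mul]
  refine Finset.sum_congr rfl fun x hx => ?_
  rw [(Finset.mem_filter.mp hx).2, projDist_eq]

lemma exists_pos_witness (hp : ∀ x, 0 ≤ p x) {L : Finset (Fin n)} {z}
    (h : 0 < projDist p L z) : ∃ x, proj L x = z ∧ 0 < p x := by
  by_contra hc
  push_neg at hc
  have h0 : projDist p L z ≤ 0 := by
    refine Finset.sum_nonpos fun x hx => ?_
    have := hc x (Finset.mem_filter.mp hx).2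
    linarith [hp x]
  linarith

lemma S_le_one (hp : ∀ x, 0 ≤ p x) (hsum : ∑ x, p x = 1) (A B : Finset (Fin n)) :
    ∑ z ∈ univ.filter (fun z => 0 < projDist p (A ∪ B) z),
      projDist p A (res A z) * projDist p B (res B z) / projDist p (A ∩ B) (res (A ∩ B) z)
      ≤ 1 := by
  classical
  set U := A ∪ B with hU
  set I := A ∩ B with hI
  have hAU : A ⊆ U := Finset.subset_union_left
  have hBU : B ⊆ U := Finset.subset_union_right
  have hIA : I ⊆ A := Finset.inter_subset_left
  have hIB : I ⊆ B := Finset.inter_subset_right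
  set T := univ.filter (fun z => 0 < projDist p U z) with hT
  -- facts about elements of T
  have hwit : ∀ z ∈ T, ∃ x, proj U x = z ∧ 0 < p x := by
    intro z hz
    exact exists_pos_witness p hp (Finset.mem_filter.mp hz).2
  have hnone : ∀ z ∈ T, ∀ i, i ∉ U → z i = none := by
    intro z hz i hi
    obtain ⟨x, hx, -⟩ := hwit z hz
    rw [← hx]
    simp [proj, hi]
  -- injectivity of the pairing map on T
  set e : (Fin n → Option (Fin t)) → (Fin n → Option (Fin t)) × (Fin n → Option (Fin t)) :=
    fun z => (res A z, res B z) with he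
  have hinj : Set.InjOn e T := by
    intro z hz z' hz' hee
    have h1 : res A z = res A z' := congrArg Prod.fst hee
    have h2 : res B z = res B z' := congrArg Prod.snd hee
    funext i
    by_cases hiA : i ∈ A
    · have := congrFun h1 i
      simpa [res, hiA] using this
    by_cases hiB : i ∈ B
    · have := congrFun h2 i
      simpa [res, hiB] using this
    have hiU : i ∉ U := by simp [hU, hiA, hiB]
    rw [hnone z hz i hiU, hnone z' hz' i hiU]
  -- rewrite as sum over the image
  have himg : ∑ z ∈ T,
      projDist p A (res A z) * projDist p B (res B z) / projDist p I (res I z)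
      = ∑ q ∈ T.image e,
          projDist p A q.1 * projDist p B q.2 / projDist p I (res I q.1) := by
    rw [Finset.sum_image (fun z hz z' hz' h => hinj hz hz' h)]
    refine Finset.sum_congr rfl fun z _ => ?_
    rw [he]
    simp only
    rw [res_res hIA]
  rw [himg]
  -- the covering family
  set W := univ.filter (fun w => 0 < projDist p I w) with hW
  have hsubset : T.image e ⊆ W.biUnion
      (fun w => (univ.filter fun a => res I a = w) ×ˢ (univ.filter fun b => res I b = w)) := by
    intro q hq
    obtain ⟨z, hz, rfl⟩ := Finset.mem_image.mp hq
    obtain ⟨x, hx, hpx⟩ := hwit z hz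
    refine Finset.mem_biUnion.mpr ⟨res I z, ?_, ?_⟩
    · refine Finset.mem_filter.mpr ⟨Finset.mem_univ _, ?_⟩
      rw [← hx, res_proj (hI ▸ Finset.inter_subset_left.trans hAU : I ⊆ U)]
      exact lt_of_lt_of_le hpx (single_le_projDist p hp I x)
    · refine Finset.mem_product.mpr ⟨?_, ?_⟩
      · exact Finset.mem_filter.mpr ⟨Finset.mem_univ _, res_res hIA z⟩
      · exact Finset.mem_filter.mpr ⟨Finset.mem_univ _, res_res hIB z⟩
  have hdisj : Set.PairwiseDisjoint (W : Set (Fin n → Option (Fin t)))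
      (fun w => ((univ.filter fun a => res I a = w) ×ˢ (univ.filter fun b => res I b = w) :
        Finset ((Fin n → Option (Fin t)) × (Fin n → Option (Fin t))))) := by
    intro w _ w' _ hne
    refine Finset.disjoint_left.mpr fun q hq hq' => hne ?_
    have h1 := (Finset.mem_filter.mp (Finset.mem_product.mp hq).1).2
    have h2 := (Finset.mem_filter.mp (Finset.mem_product.mp hq').1).2
    rw [← h1, ← h2]
  calc ∑ q ∈ T.image e, projDist p A q.1 * projDist p B q.2 / projDist p I (res I q.1)
      ≤ ∑ q ∈ W.biUnion (fun w => (univ.filter fun a => res I a = w) ×ˢ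
          (univ.filter fun b => res I b = w)),
          projDist p A q.1 * projDist p B q.2 / projDist p I (res I q.1) := by
        refine Finset.sum_le_sum_of_subset_of_nonneg hsubset fun q hq _ => ?_
        obtain ⟨w, hw, hq⟩ := Finset.mem_biUnion.mp hq
        have hq1 := (Finset.mem_filter.mp (Finset.mem_product.mp hq).1).2
        rw [hq1]
        have hwpos := (Finset.mem_filter.mp hw).2
        exact div_nonneg (mul_nonneg (projDist_nonneg p hp A _) (projDist_nonneg p hp B _))
          hwpos.le
    _ = ∑ w ∈ W, ∑ q ∈ (univ.filter fun a => res I a = w) ×ˢ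
          (univ.filter fun b => res I b = w),
          projDist p A q.1 * projDist p B q.2 / projDist p I (res I q.1) :=
        Finset.sum_biUnion hdisj
    _ = ∑ w ∈ W, projDist p I w := by
        refine Finset.sum_congr rfl fun w hw => ?_
        have hwpos := (Finset.mem_filter.mp hw).2
        have : ∀ q ∈ (univ.filter fun a => res I a = w) ×ˢ
            (univ.filter fun b => res I b = w),
            projDist p A q.1 * projDist p B q.2 / projDist p I (res I q.1)
              = projDist p A q.1 * projDist p B q.2 / projDist p I w := by
          intro q hq
          rw [(Finset.mem_filter.mp (Finset.mem_product.mp hq).1).2]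
        rw [Finset.sum_congr rfl this, Finset.sum_product]
        have h2 : ∀ a ∈ (univ.filter fun a => res I a = w),
            ∑ b ∈ (univ.filter fun b => res I b = w),
              projDist p A a * projDist p B b / projDist p I w
              = projDist p A a * projDist p I w / projDist p I w := by
          intro a _
          rw [← Finset.sum_div, ← Finset.mul_sum, marg p hIB]
        rw [Finset.sum_congr rfl h2]
        have h3 : ∀ a ∈ (univ.filter fun a => res I a = w),
            projDist p A a * projDist p I w / projDist p I w = projDist p A a := by
          intro a _
          field_simp
        rw [Finset.sum_congr rfl h3, marg p hIA]
    _ ≤ ∑ w, projDist p I w :=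
        Finset.sum_le_sum_of_subset_of_nonneg (Finset.filter_subset _ _)
          (fun w _ _ => projDist_nonneg p hp I w)
    _ = 1 := by rw [sum_projDist, hsum]

lemma gibbs_step {a b u c : ℝ} (ha : 0 < a) (hb : 0 < b) (hu : 0 < u) (hc : 0 < c) :
    u * (Real.logb 2 a + Real.logb 2 b - Real.logb 2 u - Real.logb 2 c)
      ≤ (a * b / c - u) / Real.log 2 := by
  have hlog2 : (0:ℝ) < Real.log 2 := Real.log_pos one_lt_two
  have hr : (0:ℝ) < a * b / (u * c) := by positivity
  have hlog := Real.log_le_sub_one_of_pos hr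
  have hFz : Real.logb 2 a + Real.logb 2 b - Real.logb 2 u - Real.logb 2 c
      = Real.log (a * b / (u * c)) / Real.log 2 := by
    simp only [Real.logb]
    rw [Real.log_div (by positivity) (by positivity), Real.log_mul ha.ne' hb.ne',
      Real.log_mul hu.ne' hc.ne']
    ring
  rw [hFz]
  have h1 : u * Real.log (a * b / (u * c)) ≤ u * (a * b / (u * c) - 1) :=
    mul_le_mul_of_nonneg_left hlog hu.le
  have h2 : u * (a * b / (u * c) - 1) = a * b / c - u := by
    field_simp
  have h3 : u * Real.log (a * b / (u * c)) ≤ a * b / c - u := by linarith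
  calc u * (Real.log (a * b / (u * c)) / Real.log 2)
      = u * Real.log (a * b / (u * c)) / Real.log 2 := by ring
    _ ≤ (a * b / c - u) / Real.log 2 := div_le_div_of_nonneg_right h3 hlog2.le

lemma submodular (hp : ∀ x, 0 ≤ p x) (hsum : ∑ x, p x = 1) (A B : Finset (Fin n)) :
    shEnt (projDist p (A ∪ B)) + shEnt (projDist p (A ∩ B))
      ≤ shEnt (projDist p A) + shEnt (projDist p B) := by
  classical
  set U := A ∪ B with hU
  set I := A ∩ B with hI
  have hAU : A ⊆ U := Finset.subset_union_left
  have hBU : B ⊆ U := Finset.subset_union_right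
  have hIA : I ⊆ A := Finset.inter_subset_left
  have hIB : I ⊆ B := Finset.inter_subset_right
  have hIU : I ⊆ U := hIA.trans hAU
  set F : (Fin n → Option (Fin t)) → ℝ := fun z =>
    Real.logb 2 (projDist p A (res A z)) + Real.logb 2 (projDist p B (res B z))
      - Real.logb 2 (projDist p U z) - Real.logb 2 (projDist p I (res I z)) with hFdef
  have step1 : shEnt (projDist p U) + shEnt (projDist p I)
      - shEnt (projDist p A) - shEnt (projDist p B) = ∑ x, p x * F (proj U x) := by
    rw [shEnt_projDist, shEnt_projDist, shEnt_projDist, shEnt_projDist]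
    have expand : ∀ x : Fin n → Fin t, p x * F (proj U x)
        = (p x * Real.logb 2 (projDist p A (proj A x))
            + p x * Real.logb 2 (projDist p B (proj B x)))
          - (p x * Real.logb 2 (projDist p U (proj U x))
            + p x * Real.logb 2 (projDist p I (proj I x))) := by
      intro x
      rw [hFdef]
      simp only
      rw [res_proj hAU, res_proj hBU, res_proj hIU]
      ring
    rw [Finset.sum_congr rfl fun x _ => expand x, Finset.sum_sub_distrib,
      Finset.sum_add_distrib, Finset.sum_add_distrib]
    ring
  have step2 : ∑ x, p x * F (proj U x) = ∑ z, projDist p U z * F z := by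
    rw [← Finset.sum_fiberwise (univ : Finset (Fin n → Fin t)) (proj U)
      (fun x => p x * F (proj U x))]
    refine Finset.sum_congr rfl fun z _ => ?_
    rw [projDist_eq, Finset.sum_mul]
    refine Finset.sum_congr rfl fun x hx => ?_
    rw [(Finset.mem_filter.mp hx).2]
  set T := univ.filter (fun z => 0 < projDist p U z) with hT
  have step3 : ∑ z, projDist p U z * F z = ∑ z ∈ T, projDist p U z * F z := by
    symm
    refine Finset.sum_subset (Finset.filter_subset _ _) fun z _ hz => ?_
    have h0 : projDist p U z = 0 := by
      have := projDist_nonneg p hp U z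
      have h1 : ¬ 0 < projDist p U z := by simpa [hT] using hz
      linarith
    rw [h0, zero_mul]
  have hTsum : ∑ z ∈ T, projDist p U z = 1 := by
    rw [Finset.sum_subset (Finset.filter_subset _ _) (fun z _ hz => by
      have := projDist_nonneg p hp U z
      have h1 : ¬ 0 < projDist p U z := by simpa [hT] using hz
      linarith), sum_projDist, hsum]
  have hS := S_le_one p hp hsum A B
  rw [← hU, ← hI, ← hT] at hS
  have hlog2 : (0:ℝ) < Real.log 2 := Real.log_pos one_lt_two
  have key : ∀ z ∈ T, projDist p U z * F z ≤
      (projDist p A (res A z) * projDist p B (res B z) / projDist p I (res I z)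
        - projDist p U z) / Real.log 2 := by
    intro z hz
    have hzU : 0 < projDist p U z := (Finset.mem_filter.mp hz).2
    obtain ⟨x, hx, hpx⟩ := exists_pos_witness p hp hzU
    have hzA : 0 < projDist p A (res A z) := by
      rw [← hx, res_proj hAU]
      exact lt_of_lt_of_le hpx (single_le_projDist p hp A x)
    have hzB : 0 < projDist p B (res B z) := by
      rw [← hx, res_proj hBU]
      exact lt_of_lt_of_le hpx (single_le_projDist p hp B x)
    have hzI : 0 < projDist p I (res I z) := by
      rw [← hx, res_proj hIU]
      exact lt_of_lt_of_le hpx (single_le_projDist p hp I x)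
    have := gibbs_step hzA hzB hzU hzI
    rw [hFdef]
    simpa using this
  have hfinal : ∑ x, p x * F (proj U x) ≤ 0 := by
    rw [step2, step3]
    calc ∑ z ∈ T, projDist p U z * F z
        ≤ ∑ z ∈ T, (projDist p A (res A z) * projDist p B (res B z)
              / projDist p I (res I z) - projDist p U z) / Real.log 2 :=
          Finset.sum_le_sum key
      _ = ((∑ z ∈ T, projDist p A (res A z) * projDist p B (res B z)
              / projDist p I (res I z)) - ∑ z ∈ T, projDist p U z) / Real.log 2 := by
          rw [← Finset.sum_div, Finset.sum_sub_distrib]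
      _ ≤ 0 := by
          rw [hTsum]
          apply div_nonpos_of_nonpos_of_nonneg _ hlog2.le
          linarith
  linarith

lemma shEnt_projDist_empty (hsum : ∑ x, p x = 1) :
    shEnt (projDist p (∅ : Finset (Fin n))) = 0 := by
  rw [shEnt_projDist]
  have h1 : ∀ x : Fin n → Fin t, projDist p ∅ (proj ∅ x) = 1 := by
    intro x
    rw [projDist_eq, ← hsum]
    refine Finset.sum_congr ?_ (fun _ _ => rfl)
    refine Finset.filter_true_of_mem fun y _ => ?_
    funext i
    simp [proj]
  simp [h1]

lemma shEnt_projDist_univ : shEnt (projDist p (univ : Finset (Fin n))) = shEnt p := by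
  rw [shEnt_projDist]
  unfold shEnt
  congr 1
  refine Finset.sum_congr rfl fun x _ => ?_
  have h1 : projDist p univ (proj univ x) = p x := by
    rw [projDist_eq]
    have h2 : (univ.filter fun y : Fin n → Fin t => proj univ y = proj univ x) = {x} := by
      ext y
      simp only [Finset.mem_filter, Finset.mem_univ, true_and, Finset.mem_singleton]
      constructor
      · intro h
        funext i
        have := congrFun h i
        simpa [proj] using this
      · rintro rfl; rfl
    rw [h2, Finset.sum_singleton]
  rw [h1]

/-- chain bound for submodular set functions -/
lemma chain_bound (f : Finset (Fin n) → ℝ) (h0 : f ∅ = 0)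
    (hsub : ∀ A B, f (A ∪ B) + f (A ∩ B) ≤ f A + f B) (L : Finset (Fin n)) :
    ∑ i ∈ L, (f (Finset.Iic i) - f (Finset.Iio i)) ≤ f L := by
  induction L using Finset.induction_on_max with
  | empty => simp [h0]
  | insert m L' hlt ih =>
    have hm : m ∉ L' := fun h => lt_irrefl m (hlt m h)
    rw [Finset.sum_insert hm]
    have hsubm := hsub (insert m L') (Finset.Iio m)
    have hunion : insert m L' ∪ Finset.Iio m = Finset.Iic m := by
      ext j
      simp only [Finset.mem_union, Finset.mem_insert, Finset.mem_Iio, Finset.mem_Iic]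
      constructor
      · rintro ((rfl | h) | h)
        · exact le_refl _
        · exact (hlt j h).le
        · exact h.le
      · intro h
        rcases eq_or_lt_of_le h with hq | hq
        · exact Or.inl (Or.inl hq)
        · exact Or.inr hq
    have hinter : insert m L' ∩ Finset.Iio m = L' := by
      ext j
      simp only [Finset.mem_inter, Finset.mem_insert, Finset.mem_Iio]
      constructor
      · rintro ⟨rfl | h, h2⟩
        · exact absurd h2 (lt_irrefl _)
        · exact h
      · intro h
        exact ⟨Or.inr h, hlt j h⟩
    rw [hunion, hinter] at hsubm
    linarith

lemma telescope_sum (f : Finset (Fin n) → ℝ) (h0 : f ∅ = 0) :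
    ∑ i : Fin n, (f (Finset.Iic i) - f (Finset.Iio i)) = f univ := by
  set g : ℕ → ℝ := fun k => f (univ.filter fun j : Fin n => (j : ℕ) < k) with hg
  have h1 : ∀ i : Fin n, f (Finset.Iic i) = g ((i : ℕ) + 1) := by
    intro i
    congr 1
    ext j
    simp only [Finset.mem_Iic, Finset.mem_filter, Finset.mem_univ, true_and, Fin.le_def]
    omega
  have h2 : ∀ i : Fin n, f (Finset.Iio i) = g (i : ℕ) := by
    intro i
    congr 1
    ext j
    simp only [Finset.mem_Iio, Finset.mem_filter, Finset.mem_univ, true_and, Fin.lt_def]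
  calc ∑ i : Fin n, (f (Finset.Iic i) - f (Finset.Iio i))
      = ∑ i : Fin n, (g ((i : ℕ) + 1) - g (i : ℕ)) := by
        refine Finset.sum_congr rfl fun i _ => ?_
        rw [h1, h2]
    _ = ∑ k ∈ Finset.range n, (g (k + 1) - g k) :=
        Fin.sum_univ_eq_sum_range (fun k => g (k + 1) - g k) n
    _ = g n - g 0 := Finset.sum_range_sub g n
    _ = f univ := by
        have hn : g n = f univ := by
          have he : (univ.filter fun j : Fin n => (j : ℕ) < n) = univ :=
            Finset.filter_true_of_mem fun (j : Fin n) _ => j.isLt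
          rw [hg]
          simp only [he]
        have h0' : g 0 = 0 := by
          rw [hg]
          simp only
          rw [Finset.filter_false_of_mem fun j _ => by omega]
          exact h0
        rw [hn, h0']
        ring

lemma count_subsets (l : ℕ) (hl1 : 1 ≤ l) (i : Fin n) :
    ((Finset.powersetCard l (univ : Finset (Fin n))).filter fun L => i ∈ L).card
      = (n - 1).choose (l - 1) := by
  classical
  have h2 : (n - 1).choose (l - 1)
      = (Finset.powersetCard (l - 1) ((univ : Finset (Fin n)).erase i)).card := by
    rw [Finset.card_powersetCard, Finset.card_erase_of_mem (Finset.mem_univ i),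
      Finset.card_univ, Fintype.card_fin]
  rw [h2]
  refine Finset.card_nbij' (fun L => L.erase i) (fun M => insert i M) ?_ ?_ ?_ ?_
  · intro L hL
    obtain ⟨hL1, hLi⟩ := Finset.mem_filter.mp hL
    obtain ⟨hsub, hcard⟩ := Finset.mem_powersetCard.mp hL1
    refine Finset.mem_powersetCard.mpr ⟨?_, ?_⟩
    · intro j hj
      exact Finset.mem_erase.mpr ⟨(Finset.mem_erase.mp hj).1, Finset.mem_univ j⟩
    · rw [Finset.card_erase_of_mem hLi, hcard]
  · intro M hM
    obtain ⟨hsub, hcard⟩ := Finset.mem_powersetCard.mp hM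
    have hiM : i ∉ M := fun h => (Finset.mem_erase.mp (hsub h)).1 rfl
    refine Finset.mem_filter.mpr ⟨Finset.mem_powersetCard.mpr ⟨Finset.subset_univ _, ?_⟩,
      Finset.mem_insert_self i M⟩
    rw [Finset.card_insert_of_notMem hiM, hcard]
    omega
  · intro L hL
    exact Finset.insert_erase (Finset.mem_filter.mp hL).2
  · intro M hM
    obtain ⟨hsub, hcard⟩ := Finset.mem_powersetCard.mp hM
    have hiM : i ∉ M := fun h => (Finset.mem_erase.mp (hsub h)).1 rfl
    exact Finset.erase_insert hiM

end Shearer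

open Finset in
/-- Shearer-type lemma of Chung, Graham, Frankl and Shearer: (l/n)·H(X) is at most
the average of H(X_L) over uniformly random l-element subsets L of [n]. -/
theorem stmt_6 (n t : ℕ) (p : (Fin n → Fin t) → ℝ)
    (hp : ∀ x, 0 ≤ p x) (hsum : ∑ x, p x = 1)
    (l : ℕ) (hl1 : 1 ≤ l) (hln : l ≤ n) :
    ((l : ℝ) / (n : ℝ)) * shEnt p ≤
      (1 / (n.choose l : ℝ)) *
        ∑ L ∈ Finset.powersetCard l (Finset.univ : Finset (Fin n)), shEnt (projDist p L) := by
  classical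
  set f : Finset (Fin n) → ℝ := fun L => shEnt (projDist p L) with hf
  set d : Fin n → ℝ := fun i => f (Finset.Iic i) - f (Finset.Iio i) with hd
  have h0 : f ∅ = 0 := Shearer.shEnt_projDist_empty p hsum
  have hsubmod : ∀ A B, f (A ∪ B) + f (A ∩ B) ≤ f A + f B := fun A B =>
    Shearer.submodular p hp hsum A B
  have hchain : ∀ L, ∑ i ∈ L, d i ≤ f L := Shearer.chain_bound f h0 hsubmod
  have htel : ∑ i : Fin n, d i = f univ := Shearer.telescope_sum f h0
  have huniv : f univ = shEnt p := Shearer.shEnt_projDist_univ p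
  have hswap : ∑ L ∈ powersetCard l (univ : Finset (Fin n)), ∑ i ∈ L, d i
      = ∑ i : Fin n, ((n - 1).choose (l - 1) : ℝ) * d i := by
    calc ∑ L ∈ powersetCard l (univ : Finset (Fin n)), ∑ i ∈ L, d i
        = ∑ L ∈ powersetCard l (univ : Finset (Fin n)),
            ∑ i : Fin n, if i ∈ L then d i else 0 := by
          refine Finset.sum_congr rfl fun L _ => ?_
          rw [Finset.sum_ite_mem, Finset.univ_inter]
      _ = ∑ i : Fin n, ∑ L ∈ powersetCard l (univ : Finset (Fin n)),
            if i ∈ L then d i else 0 := Finset.sum_comm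
      _ = ∑ i : Fin n, ((n - 1).choose (l - 1) : ℝ) * d i := by
          refine Finset.sum_congr rfl fun i _ => ?_
          rw [← Finset.sum_filter, Finset.sum_const, Shearer.count_subsets l hl1 i,
            nsmul_eq_mul]
  have hmain : ((n - 1).choose (l - 1) : ℝ) * shEnt p
      ≤ ∑ L ∈ powersetCard l (univ : Finset (Fin n)), f L := by
    calc ((n - 1).choose (l - 1) : ℝ) * shEnt p
        = ∑ i : Fin n, ((n - 1).choose (l - 1) : ℝ) * d i := by
          rw [← Finset.mul_sum, htel, huniv]
      _ = ∑ L ∈ powersetCard l (univ : Finset (Fin n)), ∑ i ∈ L, d i := hswap.symm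
      _ ≤ ∑ L ∈ powersetCard l (univ : Finset (Fin n)), f L :=
          Finset.sum_le_sum fun L _ => hchain L
  have hC : (0:ℝ) < (n.choose l : ℝ) := by exact_mod_cast Nat.choose_pos hln
  have hn0 : (0:ℝ) < (n : ℝ) := by
    have : 1 ≤ n := le_trans hl1 hln
    exact_mod_cast this
  have hnat : n * ((n - 1).choose (l - 1)) = n.choose l * l := by
    have h := Nat.add_one_mul_choose_eq (n - 1) (l - 1)
    have hn1 : n - 1 + 1 = n := by omega
    have hl1' : l - 1 + 1 = l := by omega
    rw [hn1, hl1'] at h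
    exact h
  have hid : (n : ℝ) * ((n - 1).choose (l - 1) : ℝ) = (n.choose l : ℝ) * (l : ℝ) := by
    exact_mod_cast hnat
  have h4 : (n : ℝ) * (((n - 1).choose (l - 1) : ℝ) * shEnt p)
      ≤ (n : ℝ) * ∑ L ∈ powersetCard l (univ : Finset (Fin n)), f L :=
    mul_le_mul_of_nonneg_left hmain hn0.le
  have h5 : (n : ℝ) * (((n - 1).choose (l - 1) : ℝ) * shEnt p)
      = (l : ℝ) * shEnt p * (n.choose l : ℝ) := by
    rw [← mul_assoc, hid]
    ring
  rw [div_mul_eq_mul_div, one_div, inv_mul_eq_div, div_le_div_iff₀ hn0 hC]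
  linarith [h4, h5]
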